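/- The group G generated by the automaton B₄ (with generators a=(c,b), b=(b,c), c=(d,d)σ, d=(a,a)σ) is infinite. -/

import Mathlib

/-- The action of a state of a Mealy automaton on finite words. -/
def mealy {Q X : Type*} (tr : Q → X → Q) (o : Q → X → X) : Q → List X → List X
  | _, [] => []
  | q, x :: w => o q x :: mealy tr o (tr q x) w

theorem mealy_bij {Q X : Type*} (tr : Q → X → Q) (o : Q → X → X)
    (h : ∀ q, Function.Bijective (o q)) (q : Q) : Function.Bijective (mealy tr o q) := by
  classical
  have L : ∀ (w : List X) (q : Q),
      mealy (fun q x => tr q (Function.surjInv (h q).surjective x))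
        (fun q x => Function.surjInv (h q).surjective x) q (mealy tr o q w) = w := by
    intro w
    induction w with
    | nil => intro q; rfl
    | cons x w ih =>
      intro q
      have hx : Function.surjInv (h q).surjective (o q x) = x :=
        Function.leftInverse_surjInv (h q) x
      simp [mealy, hx, ih]
  have R : ∀ (w : List X) (q : Q),
      mealy tr o q
        (mealy (fun q x => tr q (Function.surjInv (h q).surjective x))
          (fun q x => Function.surjInv (h q).surjective x) q w) = w := by
    intro w
    induction w with
    | nil => intro q; rfl
    | cons x w ih =>
      intro q
      have hx : o q (Function.surjInv (h q).surjective x) = x :=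
        Function.rightInverse_surjInv (h q).surjective x
      simp [mealy, hx, ih]
  exact ⟨Function.LeftInverse.injective (fun w => L w q),
    Function.RightInverse.surjective (fun w => R w q)⟩

/-- Transition function of the Bellaterra automaton B4 (states a,b,c,d = 0,1,2,3). -/
def tr4 : Fin 4 → Bool → Fin 4 := fun q x => if x then ![1, 2, 3, 0] q else ![2, 1, 3, 0] q

/-- Output function of B4: a,b act trivially, c,d flip. -/
def out4 : Fin 4 → Bool → Bool := fun q => if q.val ≤ 1 then id else Bool.not

def act (q : Fin 4) : List Bool → List Bool := mealy tr4 out4 q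

noncomputable def actE (q : Fin 4) : Equiv.Perm (List Bool) :=
  Equiv.ofBijective _ (mealy_bij tr4 out4 (by decide) q)

/-- The states of the dual automaton of B4. -/
def dAct (x : Bool) : List (Fin 4) → List (Fin 4) :=
  mealy (fun x q => out4 q x) (fun x q => tr4 q x) x

noncomputable def dActE (x : Bool) : Equiv.Perm (List (Fin 4)) :=
  Equiv.ofBijective _ (mealy_bij (fun x q => out4 q x) (fun x q => tr4 q x) (by decide) x)


/-! ### Auxiliary development: compositions of automaton states -/

/-- Composition of the actions of a list of states (rightmost acts first). -/
def Fc : List (Fin 4) → List Bool → List Bool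
  | [], w => w
  | q :: L, w => act q (Fc L w)

/-- The combined action on the first letter. -/
def outC : List (Fin 4) → Bool → Bool
  | [], x => x
  | q :: L, x => out4 q (outC L x)

/-- The list of sections at a first letter `x`. -/
def trC : List (Fin 4) → Bool → List (Fin 4)
  | [], _ => []
  | q :: L, x => tr4 q (outC L x) :: trC L x

def nab (L : List (Fin 4)) : ℕ := L.countP (fun q => q.val ≤ 1)
def ncd (L : List (Fin 4)) : ℕ := L.countP (fun q => 2 ≤ q.val)

lemma act_cons (q : Fin 4) (x : Bool) (w : List Bool) :
    act q (x :: w) = out4 q x :: act (tr4 q x) w := rfl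

lemma Fc_cons (L : List (Fin 4)) (x : Bool) (w : List Bool) :
    Fc L (x :: w) = outC L x :: Fc (trC L x) w := by
  induction L with
  | nil => rfl
  | cons q L ih => simp [Fc, outC, trC, ih, act_cons]

lemma Fc_append (A B : List (Fin 4)) (w : List Bool) :
    Fc (A ++ B) w = Fc A (Fc B w) := by
  induction A with
  | nil => rfl
  | cons q A ih => simp [Fc, ih]

lemma out4_not (q : Fin 4) (x : Bool) : out4 q (!x) = !(out4 q x) := by
  revert q x; decide

lemma outC_not (L : List (Fin 4)) (x : Bool) : outC L (!x) = !(outC L x) := by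
  induction L with
  | nil => rfl
  | cons q L ih => simp [outC, ih, out4_not]

lemma ncd_cons (q : Fin 4) (L : List (Fin 4)) :
    ncd (q :: L) = (if 2 ≤ q.val then 1 else 0) + ncd L := by
  by_cases h : 2 ≤ q.val <;> simp [ncd, List.countP_cons, h] <;> omega

lemma nab_cons (q : Fin 4) (L : List (Fin 4)) :
    nab (q :: L) = (if q.val ≤ 1 then 1 else 0) + nab L := by
  by_cases h : q.val ≤ 1 <;> simp [nab, List.countP_cons, h] <;> omega

lemma outC_eq (L : List (Fin 4)) (x : Bool) :
    outC L x = xor (decide (ncd L % 2 = 1)) x := by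
  induction L with
  | nil => simp [outC, ncd]
  | cons q L ih =>
    have hq : ∀ (q : Fin 4) (y : Bool), out4 q y = if 2 ≤ q.val then !y else y := by decide
    rw [outC, ih, hq, ncd_cons]
    rcases Nat.mod_two_eq_zero_or_one (ncd L) with hm | hm <;>
      by_cases h2 : 2 ≤ q.val <;>
      simp [h2, hm, Nat.add_mod] <;> cases x <;> rfl

lemma outC_flip (L : List (Fin 4)) (h : ncd L % 2 = 1) (x : Bool) :
    outC L x = !x := by
  rw [outC_eq, h]; simp

lemma pair_letter :
    ∀ (q : Fin 4) (y : Bool),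
      ((if (tr4 q y).val ≤ 1 then 1 else 0) + (if (tr4 q (!y)).val ≤ 1 then 1 else 0)) % 2
        = (if q.val ≤ 1 then 1 else 0) % 2 ∧
      ((if 2 ≤ (tr4 q y).val then 1 else 0) + (if 2 ≤ (tr4 q (!y)).val then 1 else 0)) % 2
        = (if q.val ≤ 1 then 1 else 0) % 2 := by
  decide

lemma tr_pair_parity (L : List (Fin 4)) (x : Bool) :
    (nab (trC L x) + nab (trC L (!x))) % 2 = nab L % 2 ∧
    (ncd (trC L x) + ncd (trC L (!x))) % 2 = nab L % 2 := by
  induction L with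
  | nil => simp [trC, nab, ncd]
  | cons q L ih =>
    have hnot : outC L (!x) = !(outC L x) := outC_not L x
    have hper := pair_letter q (outC L x)
    simp only [trC, hnot, nab_cons, ncd_cons]
    omega

lemma nab_append (A B : List (Fin 4)) : nab (A ++ B) = nab A + nab B := by
  simp [nab, List.countP_append]

lemma ncd_append (A B : List (Fin 4)) : ncd (A ++ B) = ncd A + ncd B := by
  simp [ncd, List.countP_append]

lemma Fc_two (L : List (Fin 4)) (h : ncd L % 2 = 1) (w : List Bool) :
    Fc L (Fc L (false :: w)) = false :: Fc (trC L true ++ trC L false) w := by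
  rw [Fc_cons, outC_flip L h, Fc_cons, outC_flip L h, Fc_append]
  simp

lemma iter_pres {f : List Bool → List Bool} {h : List Bool → List Bool}
    (hf : ∀ w, f (false :: w) = false :: h w) :
    ∀ (t : ℕ) (w : List Bool), f^[t] (false :: w) = false :: h^[t] w := by
  intro t
  induction t with
  | zero => intro w; rfl
  | succ t ih =>
    intro w
    rw [Function.iterate_succ_apply, Function.iterate_succ_apply, hf, ih]

lemma odometer : ∀ (k : ℕ) (L : List (Fin 4)), nab L % 2 = 1 → ncd L % 2 = 1 →
    ∀ m : ℕ, 0 < m → m < 2 ^ k →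
      (Fc L)^[m] (List.replicate k false) ≠ List.replicate k false := by
  intro k
  induction k with
  | zero => intro L _ _ m h1 h2; simp at h2; omega
  | succ k ih =>
    intro L hab hcd m hm hlt
    set M := trC L true ++ trC L false with hM
    have hpair := tr_pair_parity L true
    have hMab : nab M % 2 = 1 := by
      rw [hM, nab_append]; simp only [Bool.not_true] at hpair; omega
    have hMcd : ncd M % 2 = 1 := by
      rw [hM, ncd_append]; simp only [Bool.not_true] at hpair; omega
    have h2step : ∀ w, (Fc L)^[2] (false :: w) = false :: Fc M w := by
      intro w
      rw [show (2:ℕ) = 1 + 1 from rfl, Function.iterate_add_apply]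
      simpa using Fc_two L hcd w
    have key : ∀ (t : ℕ) (w : List Bool),
        (Fc L)^[2 * t] (false :: w) = false :: (Fc M)^[t] w := by
      intro t w
      rw [Function.iterate_mul]
      exact iter_pres h2step t w
    rw [List.replicate_succ]
    rcases Nat.even_or_odd m with ⟨t, ht⟩ | ⟨t, ht⟩
    · have htpos : 0 < t := by omega
      have htlt : t < 2 ^ k := by
        have : 2 ^ (k + 1) = 2 * 2 ^ k := by ring
        omega
      rw [show m = 2 * t from by omega, key]
      intro hcontra
      exact ih M hMab hMcd t htpos htlt (by injection hcontra)
    · rw [show m = 2 * t + 1 from by omega, Function.iterate_succ_apply', key,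
        Fc_cons, outC_flip L hcd]
      simp

lemma e_coe : ⇑(actE 3 * actE 0) = Fc [3, 0] := by
  funext w; rfl

/-- the group G generated by the automaton B₄ is infinite. -/
theorem b4_group_infinite :
    Infinite (Subgroup.closure (Set.range actE) : Subgroup (Equiv.Perm (List Bool))) := by
  set H := (Subgroup.closure (Set.range actE) : Subgroup (Equiv.Perm (List Bool))) with hHdef
  have hmem : actE 3 * actE 0 ∈ H :=
    mul_mem (Subgroup.subset_closure ⟨3, rfl⟩) (Subgroup.subset_closure ⟨0, rfl⟩)
  set gE : H := ⟨actE 3 * actE 0, hmem⟩ with hgE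
  have hord : ∀ n : ℕ, 0 < n → (actE 3 * actE 0) ^ n ≠ 1 := by
    intro n hn h1
    have hab : nab [3, 0] % 2 = 1 := by decide
    have hcd : ncd [3, 0] % 2 = 1 := by decide
    apply odometer n [3, 0] hab hcd n hn (Nat.lt_two_pow_self)
    have hiter : (⇑(actE 3 * actE 0))^[n] = ⇑((actE 3 * actE 0) ^ n) :=
      Equiv.Perm.iterate_eq_pow _ n
    rw [e_coe] at hiter
    rw [hiter, h1]
    rfl
  have hfin : ¬ IsOfFinOrder gE := by
    rw [← orderOf_eq_zero_iff, orderOf_eq_zero_iff']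
    intro n hn hgn
    refine hord n hn ?_
    have := congrArg (Subtype.val) hgn
    simpa using this
  exact Infinite.of_injective _ (injective_pow_iff_not_isOfFinOrder.mpr hfin)
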